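/- arXiv:1006.5803 — 3 statements merged into one kernel-verified Lean document; each statement's English description precedes it below -/
import Mathlib

section
/- Let H be a Hilbert space and x : Ω → H a family of vectors satisfying ⟨x_{(m,k,l;n,r,t)}, x_{(m',k',l';n',r',t')}⟩ = u_{m+m',k+l',l+k';n+n',r+t',t+r'} for a sequence u : Ω → ℂ. Then the linear operator A₀ on L = span{x_w} defined by A₀ x_{(m,k,l;n,r,t)} = x_{(m+1,k,l;n,r,t)} is well-defined (i.e., if two finite linear combinations of the x_w are equal as vectors in H, then the corresponding images agree) and is symmetric: ⟨A₀ y, z⟩ = ⟨y, A₀ z⟩ for all y, z ∈ L. -/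
/-- The index set `Ω = ℤ₊ × ℤ × ℤ × ℤ₊ × ℤ × ℤ` with elements `(m,k,l;n,r,t)`. -/
abbrev Om : Type := ℕ × ℤ × ℤ × ℕ × ℤ × ℤ

/-- The combination of indices appearing in the Gram identity. -/
def comb : Om → Om → Om
  | (m, k, l, n, r, t), (m', k', l', n', r', t') =>
    (m + m', k + l', l + k', n + n', r + t', t + r')

/-- The shift `(m,k,l;n,r,t) ↦ (m+1,k,l;n,r,t)` of the first index. -/
def incM : Om → Om
  | (m, k, l, n, r, t) => (m + 1, k, l, n, r, t)

lemma comb_incM (w w' : Om) : comb w' (incM w) = comb (incM w') w := by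
  obtain ⟨m, k, l, n, r, t⟩ := w
  obtain ⟨m', k', l', n', r', t'⟩ := w'
  simp [comb, incM]
  ring

/-- Given a family `x : Ω → H` whose Gram matrix is expressed by a sequence `u`,
the operator `A₀` defined on finite linear combinations of the `x_w` by
`A₀ x_{(m,k,l;n,r,t)} = x_{(m+1,k,l;n,r,t)}` is well defined (equal linear combinations
have equal images) and symmetric: `(A₀ y, z) = (y, A₀ z)` on the span. -/
theorem shift_operator_well_defined_and_symmetric
    {H : Type} [NormedAddCommGroup H] [InnerProductSpace ℂ H]
    (u : Om → ℂ) (x : Om → H)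
    (hGram : ∀ w w' : Om, (inner ℂ (x w') (x w) : ℂ) = u (comb w w')) :
    (∀ α β : Om →₀ ℂ,
        α.sum (fun w c => c • x w) = β.sum (fun w c => c • x w) →
        α.sum (fun w c => c • x (incM w)) = β.sum (fun w c => c • x (incM w))) ∧
    (∀ α β : Om →₀ ℂ,
        (inner ℂ (α.sum fun w c => c • x (incM w)) (β.sum fun w c => c • x w) : ℂ) =
          inner ℂ (α.sum fun w c => c • x w) (β.sum fun w c => c • x (incM w))) := by
  have key : ∀ w w' : Om, (inner ℂ (x (incM w)) (x w') : ℂ) = inner ℂ (x w) (x (incM w')) := by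
    intro w w'
    rw [hGram w' (incM w), hGram (incM w') w, comb_incM]
  have hsym : ∀ α β : Om →₀ ℂ,
      (inner ℂ (α.sum fun w c => c • x (incM w)) (β.sum fun w c => c • x w) : ℂ) =
        inner ℂ (α.sum fun w c => c • x w) (β.sum fun w c => c • x (incM w)) := by
    intro α β
    rw [Finsupp.sum, Finsupp.sum, Finsupp.sum, Finsupp.sum, sum_inner, sum_inner]
    refine Finset.sum_congr rfl fun w _ => ?_
    rw [inner_sum, inner_sum]
    refine Finset.sum_congr rfl fun w' _ => ?_
    rw [inner_smul_left, inner_smul_left, inner_smul_right, inner_smul_right, key]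
  refine ⟨?_, hsym⟩
  intro α β hαβ
  set δ : Om →₀ ℂ := α - β with hδ
  have hS : δ.sum (fun w c => c • x w) = 0 := by
    rw [hδ, Finsupp.sum_sub_index (fun w c₁ c₂ => sub_smul c₁ c₂ (x w)), hαβ, sub_self]
  have hinj : Function.Injective incM := by
    intro a b hab
    obtain ⟨m, k, l, n, r, t⟩ := a
    obtain ⟨m', k', l', n', r', t'⟩ := b
    simpa [incM, Prod.ext_iff] using hab
  set δ₂ : Om →₀ ℂ := Finsupp.mapDomain incM δ with hδ₂
  have hTδ : δ₂.sum (fun w c => c • x w) = δ.sum (fun w c => c • x (incM w)) := by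
    rw [hδ₂, Finsupp.sum_mapDomain_index (fun w => zero_smul ℂ (x w))
      (fun w c₁ c₂ => add_smul c₁ c₂ (x w))]
  have h0 : (inner ℂ (δ.sum fun w c => c • x (incM w)) (δ.sum fun w c => c • x (incM w)) : ℂ) = 0 := by
    have := hsym δ₂ δ
    rw [hTδ, hS, inner_zero_right] at this
    exact this.symm
  have hT : δ.sum (fun w c => c • x (incM w)) = 0 := by
    exact inner_self_eq_zero.mp h0
  rw [hδ, Finsupp.sum_sub_index (fun w c₁ c₂ => sub_smul c₁ c₂ (x (incM w)))] at hT
  exact sub_eq_zero.mp hT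
end

section
/- Let H be a Hilbert space, x : Ω → H a family of vectors, and A₀, B₀ symmetric operators on L = Lin{x_w} given by shifting the first and fourth indices respectively. Suppose the relations (A₀ + iI)x_{(m,k,l;n,r,t)} = x_{(m,k+1,l;n,r,t)}, (A₀ − iI)x_{(m,k,l;n,r,t)} = x_{(m,k,l+1;n,r,t)}, (B₀ + iI)x_{(m,k,l;n,r,t)} = x_{(m,k,l;n,r+1,t)}, (B₀ − iI)x_{(m,k,l;n,r,t)} = x_{(m,k,l;n,r,t+1)} hold for all w ∈ Ω. Then the Cayley transforms V_{A₀} = (A₀−iI)(A₀+iI)^{-1} and V_{B₀} = (B₀−iI)(B₀+iI)^{-1} satisfy V_{A₀}V_{B₀}x_w = x_{(m,k−1,l+1;n,r−1,t+1)} = V_{B₀}V_{A₀}x_w for all w = (m,k,l;n,r,t) ∈ Ω; in particular V_{A₀} and V_{B₀} commute on L. -/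
/-- The family `{x_w}` together with operators `A₀, B₀` (the index shifts
`m ↦ m+1` and `n ↦ n+1` on the span), assumed to satisfy
`(A₀ ± i)x_{(m,k,l;n,r,t)} = x_{(m,k+1,l;n,r,t)}`, resp. `x_{(m,k,l+1;n,r,t)}`, and the
analogous relations for `B₀` in the fifth and sixth indices.  If `V_A`, `V_B` act as the
Cayley transforms of `A₀`, `B₀` (i.e. `V(A₀x + ix) = A₀x - ix` on the span), then
`V_A V_B x_w = x_{(m,k-1,l+1;n,r-1,t+1)} = V_B V_A x_w` for every `w = (m,k,l;n,r,t)`;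
in particular `V_A` and `V_B` commute on the span of the `x_w`. -/
theorem cayley_transforms_commute_on_span
    {H : Type} [NormedAddCommGroup H] [InnerProductSpace ℂ H]
    (x : Om → H) (A0 B0 VA VB : H →ₗ[ℂ] H)
    (hA0 : ∀ m k l n r t, A0 (x (m, k, l, n, r, t)) = x (m + 1, k, l, n, r, t))
    (hB0 : ∀ m k l n r t, B0 (x (m, k, l, n, r, t)) = x (m, k, l, n + 1, r, t))
    (hAk : ∀ m k l n r t, A0 (x (m, k, l, n, r, t)) + Complex.I • x (m, k, l, n, r, t)
        = x (m, k + 1, l, n, r, t))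
    (hAl : ∀ m k l n r t, A0 (x (m, k, l, n, r, t)) - Complex.I • x (m, k, l, n, r, t)
        = x (m, k, l + 1, n, r, t))
    (hBr : ∀ m k l n r t, B0 (x (m, k, l, n, r, t)) + Complex.I • x (m, k, l, n, r, t)
        = x (m, k, l, n, r + 1, t))
    (hBt : ∀ m k l n r t, B0 (x (m, k, l, n, r, t)) - Complex.I • x (m, k, l, n, r, t)
        = x (m, k, l, n, r, t + 1))
    (hVA : ∀ m k l n r t, VA (A0 (x (m, k, l, n, r, t)) + Complex.I • x (m, k, l, n, r, t))
        = A0 (x (m, k, l, n, r, t)) - Complex.I • x (m, k, l, n, r, t))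
    (hVB : ∀ m k l n r t, VB (B0 (x (m, k, l, n, r, t)) + Complex.I • x (m, k, l, n, r, t))
        = B0 (x (m, k, l, n, r, t)) - Complex.I • x (m, k, l, n, r, t)) :
    ∀ m k l n r t,
      VA (VB (x (m, k, l, n, r, t))) = x (m, k - 1, l + 1, n, r - 1, t + 1) ∧
      VB (VA (x (m, k, l, n, r, t))) = x (m, k - 1, l + 1, n, r - 1, t + 1) ∧
      VA (VB (x (m, k, l, n, r, t))) = VB (VA (x (m, k, l, n, r, t))) := by
  have hVAx : ∀ m k l n r t, VA (x (m, k, l, n, r, t)) = x (m, k - 1, l + 1, n, r, t) := by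
    intro m k l n r t
    have h1 := hAk m (k - 1) l n r t
    rw [sub_add_cancel] at h1
    rw [← h1, hVA, hAl]
  have hVBx : ∀ m k l n r t, VB (x (m, k, l, n, r, t)) = x (m, k, l, n, r - 1, t + 1) := by
    intro m k l n r t
    have h1 := hBr m k l n (r - 1) t
    rw [sub_add_cancel] at h1
    rw [← h1, hVB, hBt]
  intro m k l n r t
  refine ⟨?_, ?_, ?_⟩ <;> simp only [hVAx, hVBx]
end

section
/- If the extended two-dimensional moment problem has a solution, i.e., there exists a non-negative Borel measure μ on ℝ² with ∫ x₁^m (x₁+i)^k (x₁−i)^l x₂^n (x₂+i)^r (x₂−i)^t dμ = u_{m,k,l;n,r,t} for all (m,k,l;n,r,t) ∈ Ω, then the solution is unique: any two such measures coincide. -/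
open MeasureTheory Complex ENNReal NNReal

/-- The integrand `x₁^m (x₁+i)^k (x₁-i)^l x₂^n (x₂+i)^r (x₂-i)^t` of the extended
two-dimensional moment problem (negative exponents are `zpow`s; `x ± i ≠ 0` for real `x`). -/
noncomputable def yfun : Om → ℝ × ℝ → ℂ
  | (m, k, l, n, r, t), p =>
      (p.1 : ℂ) ^ m * ((p.1 : ℂ) + Complex.I) ^ k * ((p.1 : ℂ) - Complex.I) ^ l *
      (p.2 : ℂ) ^ n * ((p.2 : ℂ) + Complex.I) ^ r * ((p.2 : ℂ) - Complex.I) ^ t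

/-- `μ` solves the extended two-dimensional moment problem with data `u`. -/
def ExtSolution (u : Om → ℂ) (μ : Measure (ℝ × ℝ)) : Prop :=
  ∀ w : Om, Integrable (yfun w) μ ∧ ∫ p : ℝ × ℝ, yfun w p ∂μ = u w


noncomputable abbrev Sph : Type := Metric.sphere (0:ℂ) 1

noncomputable def psi0 (x : ℝ) : ℂ := ((x:ℂ) - Complex.I) / ((x:ℂ) + Complex.I)

lemma addI_ne (x : ℝ) : (x:ℂ) + Complex.I ≠ 0 := by
  intro h
  have := congrArg Complex.im h
  simp at this

lemma subI_ne (x : ℝ) : (x:ℂ) - Complex.I ≠ 0 := by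
  intro h
  have := congrArg Complex.im h
  simp at this

lemma psi0_mem (x : ℝ) : psi0 x ∈ Metric.sphere (0:ℂ) 1 := by
  simp only [Metric.mem_sphere, dist_zero_right, psi0, norm_div]
  rw [div_eq_one_iff_eq (by simpa using addI_ne x)]
  simp [Complex.norm_def, Complex.normSq_apply]

noncomputable def psiS (x : ℝ) : Sph := ⟨psi0 x, psi0_mem x⟩

lemma psi0_inj : Function.Injective psi0 := by
  intro x y h
  unfold psi0 at h
  rw [div_eq_div_iff (addI_ne x) (addI_ne y)] at h
  have h2 : (2:ℂ) * Complex.I * x = 2 * Complex.I * y := by ring_nf; ring_nf at h; linear_combination h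
  have : (x:ℂ) = y := by
    field_simp at h2
    exact_mod_cast h2
  exact_mod_cast this

lemma psi0_cont : Continuous psi0 :=
  (Continuous.sub (Complex.continuous_ofReal) continuous_const).div
    ((Complex.continuous_ofReal).add continuous_const) addI_ne

noncomputable def Phi (p : ℝ × ℝ) : Sph × Sph := (psiS p.1, psiS p.2)

lemma psiS_cont : Continuous psiS := psi0_cont.subtype_mk _

lemma Phi_cont : Continuous Phi := (psiS_cont.comp continuous_fst).prodMk (psiS_cont.comp continuous_snd)

lemma Phi_inj : Function.Injective Phi := by
  intro p q h
  obtain ⟨h1, h2⟩ := Prod.mk.injEq .. ▸ h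
  have e1 : psi0 p.1 = psi0 q.1 := congrArg Subtype.val h1
  have e2 : psi0 p.2 = psi0 q.2 := congrArg Subtype.val h2
  exact Prod.ext (psi0_inj e1) (psi0_inj e2)

instance : PolishSpace Sph := (Metric.isClosed_sphere (x := (0:ℂ)) (ε := 1)).polishSpace

lemma Phi_me : MeasurableEmbedding Phi := Phi_cont.measurableEmbedding Phi_inj

noncomputable def mon (a b c d : ℕ) : C(Sph × Sph, ℂ) :=
  ⟨fun q => (q.1:ℂ)^a * (star (q.1:ℂ))^b * (q.2:ℂ)^c * (star (q.2:ℂ))^d, by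
    fun_prop⟩

def monSet : Set C(Sph × Sph, ℂ) := {f | ∃ a b c d, f = mon a b c d}

lemma mon_one : mon 0 0 0 0 = 1 := by ext q; simp [mon]

lemma mon_mul (a b c d a' b' c' d' : ℕ) :
    mon a b c d * mon a' b' c' d' = mon (a+a') (b+b') (c+c') (d+d') := by
  ext q; simp [mon, pow_add]; ring

lemma mon_star (a b c d : ℕ) : star (mon a b c d) = mon b a d c := by
  ext q
  simp [mon, star_pow, mul_comm, mul_assoc, mul_left_comm]

noncomputable def monMod : Submodule ℂ C(Sph × Sph, ℂ) := Submodule.span ℂ monSet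

set_option maxHeartbeats 1000000 in
lemma monMod_mul : ∀ (x y : C(Sph × Sph, ℂ)), x ∈ monMod → y ∈ monMod → x * y ∈ monMod := by
  intro x y hx hy
  have h : monMod * monMod ≤ monMod := by
    rw [monMod, Submodule.span_mul_span]
    apply Submodule.span_le.2
    rintro f ⟨g, hg, h, hh, rfl⟩
    obtain ⟨a, b, c, d, rfl⟩ := hg
    obtain ⟨a', b', c', d', rfl⟩ := hh
    show mon a b c d * mon a' b' c' d' ∈ _
    rw [mon_mul]
    exact Submodule.subset_span ⟨_, _, _, _, rfl⟩
  exact h (Submodule.mul_mem_mul hx hy)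

lemma monMod_star : ∀ x ∈ monMod, star x ∈ monMod := by
  intro x hx
  induction hx using Submodule.span_induction with
  | mem f hf => obtain ⟨a, b, c, d, rfl⟩ := hf; rw [mon_star]; exact Submodule.subset_span ⟨_, _, _, _, rfl⟩
  | zero => simpa using Submodule.zero_mem monMod
  | add f g _ _ hf hg => rw [star_add]; exact Submodule.add_mem _ hf hg
  | smul c f _ hf => rw [star_smul]; exact Submodule.smul_mem _ _ hf

noncomputable def monAlg : StarSubalgebra ℂ C(Sph × Sph, ℂ) :=
  { monMod.toSubalgebra (mon_one ▸ Submodule.subset_span ⟨0,0,0,0, rfl⟩) monMod_mul with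
    star_mem' := fun hx => monMod_star _ hx }

noncomputable def g1 : C(Sph × Sph, ℂ) := ⟨fun q => (q.1 : ℂ), by fun_prop⟩
noncomputable def g2 : C(Sph × Sph, ℂ) := ⟨fun q => (q.2 : ℂ), by fun_prop⟩

lemma g1_mem : g1 ∈ monAlg := by
  have : g1 = mon 1 0 0 0 := by ext q; simp [g1, mon]
  exact this ▸ Submodule.subset_span ⟨1,0,0,0, rfl⟩

lemma g2_mem : g2 ∈ monAlg := by
  have : g2 = mon 0 0 1 0 := by ext q; simp [g2, mon]
  exact this ▸ Submodule.subset_span ⟨0,0,1,0, rfl⟩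

lemma monAlg_sep : monAlg.SeparatesPoints := by
  intro q q' hne
  by_cases h1 : q.1 = q'.1
  · have h2 : q.2 ≠ q'.2 := fun h => hne (Prod.ext h1 h)
    exact ⟨_, ⟨g2, g2_mem, rfl⟩, fun h => h2 (Subtype.ext h)⟩
  · exact ⟨_, ⟨g1, g1_mem, rfl⟩, fun h => h1 (Subtype.ext h)⟩

lemma monAlg_dense : monAlg.topologicalClosure = ⊤ :=
  ContinuousMap.starSubalgebra_topologicalClosure_eq_top_of_separatesPoints _ monAlg_sep

lemma contMap_integrable (ν : Measure (Sph × Sph)) [IsFiniteMeasure ν] (f : C(Sph × Sph, ℂ)) :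
    Integrable f ν :=
  f.continuous.integrable_of_hasCompactSupport (HasCompactSupport.of_compactSpace _)

lemma cont_integral (ν : Measure (Sph × Sph)) [IsFiniteMeasure ν] :
    Continuous fun f : C(Sph × Sph, ℂ) => ∫ x, f x ∂ν := by
  refine LipschitzWith.continuous (K := (ν Set.univ).toNNReal) ?_
  refine LipschitzWith.of_dist_le_mul fun f g => ?_
  rw [dist_eq_norm, ← integral_sub (contMap_integrable ν f) (contMap_integrable ν g)]
  calc ‖∫ x, (f x - g x) ∂ν‖ ≤ dist f g * (ν Set.univ).toReal := by
        apply norm_integral_le_of_norm_le_const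
        exact Filter.Eventually.of_forall fun x => by
          rw [← dist_eq_norm]; exact ContinuousMap.dist_apply_le_dist x
    _ = ((ν Set.univ).toNNReal : ℝ) * dist f g := by
        rw [mul_comm]; rfl

lemma measure_eq_of_mon (ν₁ ν₂ : Measure (Sph × Sph)) [IsFiniteMeasure ν₁] [IsFiniteMeasure ν₂]
    (h : ∀ a b c d : ℕ, ∫ x, mon a b c d x ∂ν₁ = ∫ x, mon a b c d x ∂ν₂) : ν₁ = ν₂ := by
  -- integrals agree on all continuous functions
  have key : ∀ f : C(Sph × Sph, ℂ), ∫ x, f x ∂ν₁ = ∫ x, f x ∂ν₂ := by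
    have hD : IsClosed {f : C(Sph × Sph, ℂ) | ∫ x, f x ∂ν₁ = ∫ x, f x ∂ν₂} :=
      isClosed_eq (cont_integral ν₁) (cont_integral ν₂)
    have hsub : (monAlg : Set C(Sph × Sph, ℂ)) ⊆
        {f : C(Sph × Sph, ℂ) | ∫ x, f x ∂ν₁ = ∫ x, f x ∂ν₂} := by
      intro f hf
      induction hf using Submodule.span_induction with
      | mem f hf =>
          obtain ⟨a, b, c, d, rfl⟩ := hf; exact h a b c d
      | zero => simp
      | add f g _ _ hf hg =>
          show ∫ x, (f + g) x ∂ν₁ = ∫ x, (f + g) x ∂ν₂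
          simp only [ContinuousMap.add_apply]
          rw [integral_add (contMap_integrable ν₁ f) (contMap_integrable ν₁ g),
            integral_add (contMap_integrable ν₂ f) (contMap_integrable ν₂ g), hf, hg]
      | smul c f _ hf =>
          show ∫ x, (c • f) x ∂ν₁ = ∫ x, (c • f) x ∂ν₂
          simp only [ContinuousMap.smul_apply]
          rw [integral_smul, integral_smul, hf]
    intro f
    have hf : f ∈ closure (monAlg : Set C(Sph × Sph, ℂ)) := by
      have := monAlg_dense
      have : f ∈ monAlg.topologicalClosure := this ▸ trivial
      exact this
    exact closure_minimal hsub hD hf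
  -- conclude via bounded continuous nonneg functions
  refine ext_of_forall_lintegral_eq_of_IsFiniteMeasure fun f => ?_
  have hfc : Continuous fun x => ((f x : ℝ) : ℂ) := by
    exact Complex.continuous_ofReal.comp (NNReal.continuous_coe.comp f.continuous)
  have hint := key ⟨fun x => ((f x : ℝ) : ℂ), hfc⟩
  simp only [ContinuousMap.coe_mk] at hint
  have hre : ∫ x, ((f x : ℝ≥0) : ℝ) ∂ν₁ = ∫ x, ((f x : ℝ≥0) : ℝ) ∂ν₂ := by
    have e1 : ∫ x, (((f x : ℝ≥0) : ℝ) : ℂ) ∂ν₁ = ((∫ x, ((f x : ℝ≥0) : ℝ) ∂ν₁ : ℝ) : ℂ) :=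
      integral_ofReal
    have e2 : ∫ x, (((f x : ℝ≥0) : ℝ) : ℂ) ∂ν₂ = ((∫ x, ((f x : ℝ≥0) : ℝ) ∂ν₂ : ℝ) : ℂ) :=
      integral_ofReal
    rw [e1, e2] at hint
    exact_mod_cast hint
  have hi₁ : Integrable (fun x => (f x : ℝ)) ν₁ :=
    (f.continuous.subtype_val.integrable_of_hasCompactSupport
      (HasCompactSupport.of_compactSpace _))
  have hi₂ : Integrable (fun x => (f x : ℝ)) ν₂ :=
    (f.continuous.subtype_val.integrable_of_hasCompactSupport
      (HasCompactSupport.of_compactSpace _))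
  have l1 : ∫⁻ x, ((f x : ℝ≥0) : ℝ≥0∞) ∂ν₁ = ENNReal.ofReal (∫ x, ((f x : ℝ≥0) : ℝ) ∂ν₁) :=
    lintegral_coe_eq_integral _ hi₁
  have l2 : ∫⁻ x, ((f x : ℝ≥0) : ℝ≥0∞) ∂ν₂ = ENNReal.ofReal (∫ x, ((f x : ℝ≥0) : ℝ) ∂ν₂) :=
    lintegral_coe_eq_integral _ hi₂
  rw [l1, l2, hre]

lemma star_psi0 (x : ℝ) : star (psi0 x) = ((x:ℂ) + Complex.I) / ((x:ℂ) - Complex.I) := by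
  simp only [psi0, star_div₀]
  congr 1 <;> simp [Complex.ext_iff]

lemma key1 (a b : ℕ) (x : ℝ) :
    (psi0 x)^a * (star (psi0 x))^b
      = ((x:ℂ) + Complex.I) ^ ((b:ℤ) - (a:ℤ)) * ((x:ℂ) - Complex.I) ^ ((a:ℤ) - (b:ℤ)) := by
  rw [star_psi0, psi0, zpow_sub₀ (addI_ne x), zpow_sub₀ (subI_ne x), zpow_natCast, zpow_natCast,
    zpow_natCast, zpow_natCast, div_pow, div_pow]
  have h1 := pow_ne_zero a (addI_ne x)
  have h2 := pow_ne_zero b (subI_ne x)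
  field_simp

lemma mon_Phi (a b c d : ℕ) (p : ℝ × ℝ) :
    mon a b c d (Phi p) = yfun (0, (b:ℤ) - (a:ℤ), (a:ℤ) - (b:ℤ), 0, (d:ℤ) - (c:ℤ), (c:ℤ) - (d:ℤ)) p := by
  show (psi0 p.1)^a * (star (psi0 p.1))^b * (psi0 p.2)^c * (star (psi0 p.2))^d = _
  rw [mul_assoc, mul_assoc, ← mul_assoc ((psi0 p.1)^a), key1 a b, key1 c d]
  simp only [yfun, pow_zero, one_mul]
  ring

/-- The extended two-dimensional moment problem is determinate: any two non-negative Borel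
measures on `ℝ²` with the same extended moments `u` coincide. -/
theorem extended_moment_problem_unique (u : Om → ℂ) (μ₁ μ₂ : Measure (ℝ × ℝ))
    (h₁ : ExtSolution u μ₁) (h₂ : ExtSolution u μ₂) : μ₁ = μ₂ := by
  have fin : ∀ (μ : Measure (ℝ × ℝ)), ExtSolution u μ → IsFiniteMeasure μ := by
    intro μ h
    have hi := (h (0,0,0,0,0,0)).1
    have h1 : Integrable (fun _ : ℝ × ℝ => (1:ℂ)) μ := by
      have e : yfun (0,0,0,0,0,0) = fun _ : ℝ × ℝ => (1:ℂ) := by funext p; simp [yfun]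
      rwa [e] at hi
    rcases integrable_const_iff.mp h1 with h|h
    · exact absurd h one_ne_zero
    · exact h
  haveI := fin μ₁ h₁; haveI := fin μ₂ h₂
  haveI : IsFiniteMeasure (μ₁.map Phi) := Measure.isFiniteMeasure_map _ _
  haveI : IsFiniteMeasure (μ₂.map Phi) := Measure.isFiniteMeasure_map _ _
  have hmom : ∀ a b c d : ℕ,
      ∫ x, mon a b c d x ∂(μ₁.map Phi) = ∫ x, mon a b c d x ∂(μ₂.map Phi) := by
    intro a b c d
    set w : Om := (0, (b:ℤ)-(a:ℤ), (a:ℤ)-(b:ℤ), 0, (d:ℤ)-(c:ℤ), (c:ℤ)-(d:ℤ)) with hw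
    rw [integral_map Phi_me.measurable.aemeasurable
        ((mon a b c d).continuous.aestronglyMeasurable),
      integral_map Phi_me.measurable.aemeasurable
        ((mon a b c d).continuous.aestronglyMeasurable)]
    have e : (fun p => mon a b c d (Phi p)) = yfun w := funext (mon_Phi a b c d)
    rw [e, (h₁ w).2, (h₂ w).2]
  have hmap : μ₁.map Phi = μ₂.map Phi := measure_eq_of_mon _ _ hmom
  refine Measure.ext fun s hs => ?_
  have e1 : μ₁ s = (μ₁.map Phi) (Phi '' s) := by
    rw [Phi_me.map_apply, Set.preimage_image_eq s Phi_inj]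
  have e2 : μ₂ s = (μ₂.map Phi) (Phi '' s) := by
    rw [Phi_me.map_apply, Set.preimage_image_eq s Phi_inj]
  rw [e1, hmap, ← e2]
end
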